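/- Quantitative overlap floor (two-expert family): Let X be uniformly distributed on [0,1] and let w*(x) = α*(x) β₁* + (1 − α*(x)) β₂* with β₁*, β₂* ∈ ℝ^J, β₁* ≠ β₂*, and α* : [0,1] → [0,1] nondecreasing. Suppose there exist an interval [a,b] ⊆ [0,1] and κ > 0 such that α*(t) − α*(s) ≥ κ(t − s) for all a ≤ s < t ≤ b. Let W^hard_M denote the class of functions w : [0,1] → ℝ^J that are constant on each cell of a partition of [0,1] into at most M intervals. Then inf_{w ∈ W^hard_M} E[‖w*(X) − w(X)‖₂²] ≥ ‖β₁* − β₂*‖₂² κ² (b − a)³ / (12 M²). -/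

import Mathlib

open MeasureTheory

section AuxOverlapFloor
open Set

lemma le_add_eps {x y : ℝ} (h : ∀ ε : ℝ, 0 < ε → x ≤ y + ε) : x ≤ y := by
  by_contra hc
  push_neg at hc
  have := h ((x - y)/2) (by linarith)
  linarith

lemma exists_x0 (α : ℝ → ℝ) (κ a b : ℝ) (hκ : 0 < κ) (hmono : Monotone α)
    (hg : ∀ s t : ℝ, a ≤ s → s < t → t ≤ b → κ * (t - s) ≤ α t - α s)
    (s e : ℝ) (has : a ≤ s) (hse : s ≤ e) (heb : e ≤ b) (g : ℝ) :
    ∃ x0 ∈ Icc s e, ∀ x ∈ Icc s e, κ * |x - x0| ≤ |α x - g| := by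
  by_cases hT : (Icc s e ∩ {y | α y ≤ g}).Nonempty
  · set T := Icc s e ∩ {y | α y ≤ g} with hTdef
    have hbdd : BddAbove T := ⟨e, fun y hy => hy.1.2⟩
    set x0 := sSup T with hx0def
    have hx0e : x0 ≤ e := csSup_le hT (fun y hy => hy.1.2)
    have hsx0 : s ≤ x0 := by
      obtain ⟨y, hy⟩ := hT
      exact hy.1.1.trans (le_csSup hbdd hy)
    refine ⟨x0, ⟨hsx0, hx0e⟩, ?_⟩
    intro x hx
    rcases lt_trichotomy x x0 with hlt | heq | hgt
    · -- x < x0 : α x ≤ g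
      have hαx : α x ≤ g := by
        obtain ⟨y, hy, hxy⟩ := (lt_csSup_iff hbdd hT).mp hlt
        exact (hmono hxy.le).trans hy.2
      rw [abs_of_neg (by linarith), abs_of_nonpos (by linarith)]
      refine le_add_eps (fun ε hε => ?_)
      have hδ : 0 < ε / κ := by positivity
      have hlt' : max x (x0 - ε/κ) < x0 := by
        rcases le_total x (x0 - ε/κ) with h | h
        · rw [max_eq_right h]; linarith
        · rw [max_eq_left h]; exact hlt
      obtain ⟨y, hy, hxy⟩ := (lt_csSup_iff hbdd hT).mp hlt'
      have hxy1 : x < y := lt_of_le_of_lt (le_max_left _ _) hxy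
      have hxy2 : x0 - ε/κ < y := lt_of_le_of_lt (le_max_right _ _) hxy
      have hgr := hg x y (has.trans hx.1) hxy1 (hy.1.2.trans heb)
      have : κ * (y - x) ≤ g - α x := by
        have := hy.2; simp only [Set.mem_setOf_eq] at this; linarith
      have hyx : κ * (x0 - ε/κ - x) ≤ κ * (y - x) :=
        mul_le_mul_of_nonneg_left (by linarith) hκ.le
      have : κ * (x0 - ε/κ - x) ≤ g - α x := le_trans hyx this
      have hker : κ * (ε/κ) = ε := by field_simp
      nlinarith [mul_comm κ ((x0:ℝ) - ε/κ - x)]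
    · subst heq; simp [abs_nonneg]
    · -- x0 < x : α x > g
      have hnotT : ∀ z, z ∈ Icc s e → x0 < z → g < α z := by
        intro z hz hzx0
        by_contra hc
        push_neg at hc
        exact absurd (le_csSup hbdd ⟨hz, hc⟩) (not_le.mpr hzx0)
      have hαx : g < α x := hnotT x hx hgt
      rw [abs_of_pos (by linarith), abs_of_pos (by linarith)]
      refine le_add_eps (fun ε hε => ?_)
      have hδ : 0 < ε / κ := by positivity
      rcases lt_or_ge (x0 + ε/κ) x with hcase | hcase
      · have hz : x0 + ε/κ ∈ Icc s e := ⟨by linarith, by linarith [hx.2]⟩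
        have hαz : g < α (x0 + ε/κ) := hnotT _ hz (by linarith)
        have hgr := hg (x0 + ε/κ) x (has.trans hz.1) hcase (hx.2.trans heb)
        have hsplit : κ * (x - x0) = κ * (x - (x0 + ε/κ)) + ε := by
          field_simp; ring
        linarith
      · have hsplit : κ * (x - x0) ≤ κ * (ε/κ) :=
          mul_le_mul_of_nonneg_left (by linarith) hκ.le
        have hker : κ * (ε/κ) = ε := by field_simp
        linarith
  · -- α > g everywhere on [s,e]
    have hgt : ∀ y ∈ Icc s e, g < α y := by
      intro y hy
      by_contra hc
      push_neg at hc
      exact hT ⟨y, ⟨hy, hc⟩⟩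
    refine ⟨s, ⟨le_refl s, hse⟩, fun x hx => ?_⟩
    have h1 : g < α x := hgt x hx
    have h2 : g < α s := hgt s ⟨le_refl s, hse⟩
    rw [abs_of_nonneg (by linarith [hx.1]), abs_of_pos (by linarith)]
    rcases eq_or_lt_of_le hx.1 with heq | hlt
    · rw [← heq]; simp; linarith
    · have := hg s x has hlt (hx.2.trans heb)
      linarith

lemma key1d (α : ℝ → ℝ) (κ a b : ℝ) (hκ : 0 < κ) (hmono : Monotone α)
    (hg : ∀ s t : ℝ, a ≤ s → s < t → t ≤ b → κ * (t - s) ≤ α t - α s)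
    (s e : ℝ) (has : a ≤ s) (hse : s ≤ e) (heb : e ≤ b) (g : ℝ)
    (hint : IntegrableOn (fun x => (α x - g)^2) (Set.Ioo s e)) :
    κ^2 * (e - s)^3 / 12 ≤ ∫ x in Set.Ioo s e, (α x - g)^2 := by
  obtain ⟨x0, hx0, hpt⟩ := exists_x0 α κ a b hκ hmono hg s e has hse heb g
  have hpt2 : ∀ x ∈ Set.Ioo s e, κ^2 * (x - x0)^2 ≤ (α x - g)^2 := by
    intro x hx
    have h := hpt x ⟨hx.1.le, hx.2.le⟩
    have h2 := mul_self_le_mul_self (by positivity) h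
    have e1 : (κ*|x-x0|)*(κ*|x-x0|) = κ^2*(x-x0)^2 := by
      rw [mul_mul_mul_comm, ← sq, ← sq, sq_abs]
    have e2 : |α x - g| * |α x - g| = (α x - g)^2 := by
      rw [← sq, sq_abs]
    rw [e1, e2] at h2
    exact h2
  have hint2 : IntegrableOn (fun x => κ^2*(x-x0)^2) (Set.Ioo s e) := by
    exact ((continuous_const.mul ((continuous_id.sub continuous_const).pow 2)).integrableOn_Icc).mono_set
      Set.Ioo_subset_Icc_self
  have step1 := setIntegral_mono_on hint2 hint measurableSet_Ioo hpt2
  have hcomp : ∫ x in Set.Ioo s e, (x - x0)^2 = ((e-x0)^3 - (s-x0)^3)/3 := by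
    rw [← integral_Ioc_eq_integral_Ioo, ← intervalIntegral.integral_of_le hse]
    rw [intervalIntegral.integral_comp_sub_right (fun x => x^2) x0, integral_pow]
    norm_num
  have hconst : ∫ x in Set.Ioo s e, κ^2*(x-x0)^2 = κ^2 * (((e-x0)^3 - (s-x0)^3)/3) := by
    rw [integral_const_mul, hcomp]
  have hkey : κ^2 * (e - s)^3 / 12 ≤ κ^2 * (((e-x0)^3 - (s-x0)^3)/3) := by
    have hp : 0 ≤ x0 - s := by linarith [hx0.1]
    have hq : 0 ≤ e - x0 := by linarith [hx0.2]
    have hint3 : 0 ≤ κ^2 * ((e - x0) + (x0 - s)) * ((e - x0) - (x0 - s))^2 :=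
      mul_nonneg (mul_nonneg (sq_nonneg κ) (by linarith)) (sq_nonneg _)
    nlinarith [hint3]
  calc κ^2 * (e - s)^3 / 12 ≤ κ^2 * (((e-x0)^3 - (s-x0)^3)/3) := hkey
    _ = ∫ x in Set.Ioo s e, κ^2*(x-x0)^2 := hconst.symm
    _ ≤ ∫ x in Set.Ioo s e, (α x - g)^2 := step1

open RealInnerProductSpace in
lemma geom {J : ℕ} (β₁ β₂ c : EuclideanSpace ℝ (Fin J)) (hβ : β₁ ≠ β₂) :
    ∃ g : ℝ, ∀ r : ℝ,
      ‖β₁ - β₂‖^2 * (r - g)^2 ≤ ‖r • β₁ + (1 - r) • β₂ - c‖^2 := by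
  set D := ‖β₁ - β₂‖ with hDdef
  have hD : 0 < D := by
    rw [hDdef, norm_pos_iff]
    exact sub_ne_zero.mpr hβ
  set u : EuclideanSpace ℝ (Fin J) := (D⁻¹ : ℝ) • (β₁ - β₂) with hudef
  have hu : ‖u‖ = 1 := by
    rw [hudef, norm_smul, norm_inv, Real.norm_eq_abs, abs_of_pos hD, ← hDdef,
      inv_mul_cancel₀ hD.ne']
  set d : ℝ := ⟪β₂ - c, u⟫ with hddef
  refine ⟨-d/D, fun r => ?_⟩
  have hvec : r • β₁ + (1 - r) • β₂ - c = r • (β₁ - β₂) + (β₂ - c) := by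
    module
  have hinner : ⟪r • β₁ + (1 - r) • β₂ - c, u⟫ = r * D + d := by
    rw [hvec, inner_add_left, real_inner_smul_left]
    congr 1
    have : ⟪β₁ - β₂, u⟫ = D := by
      rw [hudef, real_inner_smul_right, real_inner_self_eq_norm_sq, ← hDdef]
      field_simp
    rw [this]
  have habs := abs_real_inner_le_norm (r • β₁ + (1 - r) • β₂ - c) u
  rw [hu, mul_one] at habs
  have hsq : (r * D + d)^2 ≤ ‖r • β₁ + (1 - r) • β₂ - c‖^2 := by
    rw [← hinner]
    calc ⟪r • β₁ + (1 - r) • β₂ - c, u⟫^2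
        = |⟪r • β₁ + (1 - r) • β₂ - c, u⟫|^2 := (sq_abs _).symm
      _ ≤ ‖r • β₁ + (1 - r) • β₂ - c‖^2 := by
          apply pow_le_pow_left₀ (abs_nonneg _) habs
  have hid : D^2 * (r - (-d/D))^2 = (r * D + d)^2 := by
    field_simp
    ring
  rw [hid]
  exact hsq

lemma fin_telescope {M : ℕ} (f : Fin (M+1) → ℝ) :
    ∑ i : Fin M, (f i.succ - f i.castSucc) = f (Fin.last M) - f 0 := by
  induction M with
  | zero => simp
  | succ n ih =>
    rw [Fin.sum_univ_castSucc]
    have h1 : ∀ i : Fin n, (i.castSucc).succ = (i.succ).castSucc := by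
      intro i; rfl
    have h2 : ∑ i : Fin n, (f (i.castSucc).succ - f (i.castSucc).castSucc)
        = f (Fin.last n).castSucc - f 0 := by
      have := ih (fun j => f j.castSucc)
      simp only [h1] at *
      rw [this]
      simp [Fin.castSucc_zero]
    rw [h2, Fin.succ_last]
    ring

lemma clip_le (a b u v : ℝ) (hab : a ≤ b) (huv : u ≤ v) :
    max a (min b v) - max a (min b u) ≤ max (min v b - max u a) 0 := by
  rcases le_total b u with hbu | hub
  · rw [min_eq_left hbu, min_eq_left (hbu.trans huv), max_eq_right hab]
    simp
  · rcases le_total v a with hva | hav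
    · rw [min_eq_right (hva.trans hab), min_eq_right ((huv.trans hva).trans hab),
        max_eq_left hva, max_eq_left (huv.trans hva)]
      simp
    · have hcv : max a (min b v) = min b v :=
        max_eq_right (le_min hab hav)
      have hcu : max a (min b u) = max a u := by rw [min_eq_right hub]
      rw [hcv, hcu, min_comm b v, max_comm a u]
      exact le_max_left _ _

lemma cover {M : ℕ} (t : Fin (M+1) → ℝ) (hmono : Monotone t) (h0 : t 0 = 0)
    (hl : t (Fin.last M) = 1) :
    Set.Ico (0:ℝ) 1 ⊆ ⋃ i : Fin M, Set.Ico (t i.castSucc) (t i.succ) := by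
  intro x hx
  set S : Finset (Fin (M+1)) := Finset.univ.filter (fun i => t i ≤ x) with hSdef
  have hS0 : (0 : Fin (M+1)) ∈ S := by
    simp [hSdef, h0, hx.1]
  have hne : S.Nonempty := ⟨0, hS0⟩
  set m := S.max' hne with hmdef
  have hm : t m ≤ x := by
    have := S.max'_mem hne
    simp [hSdef] at this
    exact this
  have hmlast : m ≠ Fin.last M := by
    intro h
    rw [h, hl] at hm
    exact absurd hx.2 (not_lt.mpr hm)
  have hmval : (m : ℕ) < M := by
    have := m.isLt
    rcases lt_or_eq_of_le (Nat.lt_succ_iff.mp this) with h | h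
    · exact h
    · exact absurd (Fin.ext h : m = Fin.last M) hmlast
  set i : Fin M := ⟨(m : ℕ), hmval⟩ with hidef
  have hcast : i.castSucc = m := by
    apply Fin.ext
    rfl
  have hsucc : x < t i.succ := by
    by_contra hc
    push_neg at hc
    have hmem : i.succ ∈ S := by simp [hSdef, hc]
    have := S.le_max' i.succ hmem
    rw [← hmdef] at this
    have : (i.succ : ℕ) ≤ (m : ℕ) := this
    simp [Fin.val_succ, hidef] at this
  refine Set.mem_iUnion.mpr ⟨i, ?_⟩
  exact ⟨hcast ▸ hm, hsucc⟩

end AuxOverlapFloor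

/-- The class of `ℝ^J`-valued step functions constant on each cell of a partition
of `[0,1]` into at most `M` intervals. -/
def hardClass (J M : ℕ) : Set (ℝ → EuclideanSpace ℝ (Fin J)) :=
  {w | ∃ (t : Fin (M + 1) → ℝ) (c : Fin M → EuclideanSpace ℝ (Fin J)),
    Monotone t ∧ t 0 = 0 ∧ t (Fin.last M) = 1 ∧
    ∀ i : Fin M, ∀ x ∈ Set.Ico (t i.castSucc) (t i.succ), w x = c i}

/-- **Quantitative overlap floor (two-expert family).** If `X ~ Unif[0,1]`,
`wstar x = αs x • β₁ + (1 - αs x) • β₂` with `β₁ ≠ β₂` and nondecreasing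
`αs : [0,1] → [0,1]` satisfying κ-growth on `[a,b] ⊆ [0,1]`, then the best
`M`-interval hard approximation error is at least
`‖β₁ - β₂‖² κ² (b - a)³ / (12 M²)`. -/
theorem quantitative_overlap_floor
    {J M : ℕ} (hM : 1 ≤ M)
    (β₁ β₂ : EuclideanSpace ℝ (Fin J)) (hβ : β₁ ≠ β₂)
    (αs : ℝ → ℝ)
    (hα01 : ∀ x ∈ Set.Icc (0 : ℝ) 1, αs x ∈ Set.Icc (0 : ℝ) 1)
    (hαmono : MonotoneOn αs (Set.Icc (0 : ℝ) 1))
    (a b κ : ℝ) (ha : 0 ≤ a) (hab : a ≤ b) (hb : b ≤ 1) (hκ : 0 < κ)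
    (hgrowth : ∀ s t : ℝ, a ≤ s → s < t → t ≤ b → κ * (t - s) ≤ αs t - αs s)
    (wstar : ℝ → EuclideanSpace ℝ (Fin J))
    (hw : ∀ x, wstar x = αs x • β₁ + (1 - αs x) • β₂) :
    ‖β₁ - β₂‖ ^ 2 * κ ^ 2 * (b - a) ^ 3 / (12 * (M : ℝ) ^ 2)
      ≤ sInf ((fun w => ∫ x in Set.Icc (0 : ℝ) 1, ‖wstar x - w x‖ ^ 2) ''
          hardClass J M) := by
  classical
  have hMne : (M:ℝ) ≠ 0 := Nat.cast_ne_zero.mpr (by omega)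
  have hMpos : (0:ℝ) < M := Nat.cast_pos.mpr (by omega)
  -- the image is nonempty
  have hw0 : (fun _ : ℝ => (0 : EuclideanSpace ℝ (Fin J))) ∈ hardClass J M := by
    refine ⟨fun i => ((i:ℕ):ℝ)/(M:ℝ), fun _ => 0, ?_, ?_, ?_, ?_⟩
    · intro i j hij
      exact (div_le_div_iff_of_pos_right hMpos).mpr (by exact_mod_cast hij)
    · simp
    · simp [Fin.val_last, div_self hMne]
    · intro i x _; rfl
  refine le_csInf ⟨_, Set.mem_image_of_mem _ hw0⟩ ?_
  rintro v ⟨w, ⟨t, c, htm, ht0, htl, hwc⟩, rfl⟩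
  simp only
  -- basic setup
  set D := ‖β₁ - β₂‖ with hDdef
  have hD : 0 < D := by rw [hDdef, norm_pos_iff]; exact sub_ne_zero.mpr hβ
  choose g hg using fun i => geom β₁ β₂ (c i) hβ
  -- clamped mixing function
  set α' : ℝ → ℝ := fun x => αs (max 0 (min 1 x)) with hα'def
  have hclamp_mem : ∀ x : ℝ, max 0 (min 1 x) ∈ Set.Icc (0:ℝ) 1 :=
    fun x => ⟨le_max_left _ _, max_le zero_le_one (min_le_left _ _)⟩
  have hα'mono : Monotone α' := fun x y hxy =>
    hαmono (hclamp_mem x) (hclamp_mem y)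
      (max_le_max le_rfl (min_le_min le_rfl hxy))
  have hα'eq : ∀ x ∈ Set.Icc (0:ℝ) 1, α' x = αs x := by
    intro x hx
    simp only [hα'def]
    rw [min_eq_right hx.2, max_eq_right hx.1]
  have hα'01 : ∀ x, α' x ∈ Set.Icc (0:ℝ) 1 := fun x => hα01 _ (hclamp_mem x)
  have hα'meas : Measurable α' := hα'mono.measurable
  have hα'growth : ∀ s u : ℝ, a ≤ s → s < u → u ≤ b → κ * (u - s) ≤ α' u - α' s := by
    intro s u hs hsu hub
    have h1 : s ∈ Set.Icc (0:ℝ) 1 := ⟨ha.trans hs, by linarith [hsu.le.trans hub]⟩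
    have h2 : u ∈ Set.Icc (0:ℝ) 1 := ⟨ha.trans (hs.trans hsu.le), hub.trans hb⟩
    rw [hα'eq s h1, hα'eq u h2]
    exact hgrowth s u hs hsu hub
  have htmem : ∀ i, t i ∈ Set.Icc (0:ℝ) 1 := fun i =>
    ⟨ht0 ▸ htm (Fin.zero_le i), htl ▸ htm (Fin.le_last i)⟩
  set h : ℝ → ℝ := fun x => ‖wstar x - w x‖^2 with hhdef
  have hwstar' : ∀ x ∈ Set.Icc (0:ℝ) 1, wstar x = α' x • β₁ + (1 - α' x) • β₂ := by
    intro x hx; rw [hw x, hα'eq x hx]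
  -- integrability of the comparison family
  have hGmeas : ∀ z : EuclideanSpace ℝ (Fin J),
      Measurable (fun x => ‖α' x • β₁ + (1 - α' x) • β₂ - z‖^2) := by
    intro z
    apply Measurable.pow_const
    apply Measurable.norm
    exact ((hα'meas.smul_const β₁).add
      ((measurable_const.sub hα'meas).smul_const β₂)).sub measurable_const
  have hGbdd : ∀ z : EuclideanSpace ℝ (Fin J), ∀ x : ℝ,
      ‖α' x • β₁ + (1 - α' x) • β₂ - z‖ ≤ ‖β₁‖ + ‖β₂‖ + ‖z‖ := by
    intro z x
    have h01 := hα'01 x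
    have e1 : ‖α' x • β₁‖ ≤ ‖β₁‖ := by
      rw [norm_smul, Real.norm_eq_abs, abs_of_nonneg h01.1]
      exact mul_le_of_le_one_left (norm_nonneg β₁) h01.2
    have e2 : ‖(1 - α' x) • β₂‖ ≤ ‖β₂‖ := by
      rw [norm_smul, Real.norm_eq_abs, abs_of_nonneg (by linarith [h01.2])]
      exact mul_le_of_le_one_left (norm_nonneg β₂) (by linarith [h01.1])
    calc ‖α' x • β₁ + (1 - α' x) • β₂ - z‖
        ≤ ‖α' x • β₁ + (1 - α' x) • β₂‖ + ‖z‖ := norm_sub_le _ _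
      _ ≤ ‖α' x • β₁‖ + ‖(1 - α' x) • β₂‖ + ‖z‖ := by
          have := norm_add_le (α' x • β₁) ((1 - α' x) • β₂); linarith
      _ ≤ ‖β₁‖ + ‖β₂‖ + ‖z‖ := by linarith
  have hGint : ∀ z : EuclideanSpace ℝ (Fin J),
      IntegrableOn (fun x => ‖α' x • β₁ + (1 - α' x) • β₂ - z‖^2) (Set.Icc (0:ℝ) 1) := by
    intro z
    refine Measure.integrableOn_of_bounded (M := (‖β₁‖ + ‖β₂‖ + ‖z‖)^2)
      measure_Icc_lt_top.ne (hGmeas z).aestronglyMeasurable (ae_of_all _ fun x => ?_)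
    rw [Real.norm_eq_abs, abs_of_nonneg (sq_nonneg _)]
    exact pow_le_pow_left₀ (norm_nonneg _) (hGbdd z x) 2
  -- integrability of h on [0,1]
  set P : Fin M → Set ℝ := fun i => Set.Ico (t i.castSucc) (t i.succ) with hPdef
  have hPsub : ∀ i, P i ⊆ Set.Icc (0:ℝ) 1 := fun i x hx =>
    ⟨(htmem i.castSucc).1.trans hx.1, hx.2.le.trans (htmem i.succ).2⟩
  have hhP : ∀ i, IntegrableOn h (P i) := by
    intro i
    apply ((hGint (c i)).mono_set (hPsub i)).congr_fun _ measurableSet_Ico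
    intro x hx
    have hx01 := hPsub i hx
    simp only [hhdef]
    rw [hwc i x hx, hwstar' x hx01]
  have hhone : IntegrableOn h {(1:ℝ)} := by
    have hres : (volume : Measure ℝ).restrict {(1:ℝ)} = 0 := by
      rw [Measure.restrict_singleton, Real.volume_singleton, zero_smul]
    rw [IntegrableOn, hres]
    exact integrable_zero_measure
  have hcov : Set.Icc (0:ℝ) 1 ⊆ (⋃ i, P i) ∪ {1} := by
    intro x hx
    rcases eq_or_lt_of_le hx.2 with heq | hlt
    · right; exact heq
    · left; exact cover t htm ht0 htl ⟨hx.1, hlt⟩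
  have hhint : IntegrableOn h (Set.Icc (0:ℝ) 1) :=
    ((integrableOn_finite_iUnion.mpr hhP).union hhone).mono_set hcov
  -- the essential subintervals
  set sI : Fin M → ℝ := fun i => max (t i.castSucc) a with hsIdef
  set eI : Fin M → ℝ := fun i => min (t i.succ) b with heIdef
  set S : Fin M → Set ℝ := fun i => Set.Ioo (sI i) (eI i) with hSdef
  have hSP : ∀ i, S i ⊆ P i := fun i x hx =>
    ⟨(le_max_left _ _).trans hx.1.le, hx.2.trans_le (min_le_left _ _)⟩
  have hSsub : ∀ i, S i ⊆ Set.Icc (0:ℝ) 1 := fun i => (hSP i).trans (hPsub i)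
  have hkeydisj : ∀ i j : Fin M, i < j → Disjoint (S i) (S j) := by
    intro i j hlt
    apply Set.disjoint_left.mpr
    intro x hxi hxj
    have h1 : x < t i.succ := hxi.2.trans_le (min_le_left _ _)
    have h2 : t j.castSucc < x := (le_max_left _ _).trans_lt hxj.1
    have hle : i.succ ≤ j.castSucc := by
      rw [Fin.le_def]
      simp only [Fin.val_succ, Fin.coe_castSucc]
      exact Fin.lt_def.mp hlt
    have h3 : t i.succ ≤ t j.castSucc := htm hle
    linarith
  have hSdisj : Set.Pairwise (↑(Finset.univ : Finset (Fin M))) (Function.onFun Disjoint S) := by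
    intro i _ j _ hij
    rcases hij.lt_or_gt with hlt | hlt
    · exact hkeydisj i j hlt
    · exact (hkeydisj j i hlt).symm
  -- lengths
  set ℓ : Fin M → ℝ := fun i => max (eI i - sI i) 0 with hℓdef
  have hℓnn : ∀ i, 0 ≤ ℓ i := fun i => le_max_right _ _
  have hα2int : ∀ (r : ℝ) (s : Set ℝ), s ⊆ Set.Icc (0:ℝ) 1 →
      IntegrableOn (fun x => (α' x - r)^2) s := by
    intro r s hs
    apply IntegrableOn.mono_set _ hs
    refine Measure.integrableOn_of_bounded (M := (1 + |r|)^2)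
      measure_Icc_lt_top.ne
      ((hα'meas.sub measurable_const).pow_const 2).aestronglyMeasurable
      (ae_of_all _ fun x => ?_)
    · have h01 := hα'01 x
      rw [Real.norm_eq_abs, abs_of_nonneg (sq_nonneg _)]
      have habs : |α' x - r| ≤ 1 + |r| := by
        have := abs_sub_abs_le_abs_sub (α' x) r
        have h2 : |α' x| ≤ 1 := abs_le.mpr ⟨by linarith [h01.1], h01.2⟩
        calc |α' x - r| ≤ |α' x| + |r| := abs_sub _ _
          _ ≤ 1 + |r| := by linarith
      calc (α' x - r)^2 = |α' x - r|^2 := (sq_abs _).symm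
        _ ≤ (1 + |r|)^2 := pow_le_pow_left₀ (abs_nonneg _) habs 2
  -- per-piece lower bound
  have hpiece : ∀ i, D^2 * (κ^2 * (ℓ i)^3 / 12) ≤ ∫ x in S i, h x := by
    intro i
    have hint1 : IntegrableOn (fun x => D^2 * (α' x - g i)^2) (S i) :=
      (hα2int (g i) (S i) (hSsub i)).const_mul _
    have hinth : IntegrableOn h (S i) := hhint.mono_set (hSsub i)
    have hptw : ∀ x ∈ S i, D^2 * (α' x - g i)^2 ≤ h x := by
      intro x hx
      have hx01 := hSsub i hx
      have hxP := hSP i hx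
      simp only [hhdef]
      rw [hwc i x hxP, hwstar' x hx01]
      exact hg i (α' x)
    have step := setIntegral_mono_on hint1 hinth measurableSet_Ioo hptw
    rcases le_or_gt (eI i) (sI i) with hle | hlt
    · have hempty : S i = ∅ := Set.Ioo_eq_empty (not_lt.mpr hle)
      have hℓ0 : ℓ i = 0 := max_eq_right (by linarith)
      rw [hℓ0, hempty]
      simp
    · have hkey := key1d α' κ a b hκ hα'mono hα'growth (sI i) (eI i)
        (le_max_right _ _) hlt.le (min_le_right _ _) (g i)
        (hα2int (g i) (S i) (hSsub i))
      have hℓi : ℓ i = eI i - sI i := max_eq_left (by linarith)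
      rw [hℓi]
      calc D^2 * (κ^2*(eI i - sI i)^3/12)
          ≤ D^2 * ∫ x in S i, (α' x - g i)^2 :=
            mul_le_mul_of_nonneg_left hkey (sq_nonneg D)
        _ = ∫ x in S i, D^2 * (α' x - g i)^2 := (integral_const_mul _ _).symm
        _ ≤ ∫ x in S i, h x := step
  -- sum of the pieces is below the full integral
  have hsum1 : ∑ i, ∫ x in S i, h x ≤ ∫ x in Set.Icc (0:ℝ) 1, h x := by
    rw [← integral_biUnion_finset Finset.univ (fun i _ => measurableSet_Ioo) hSdisj
      (fun i _ => hhint.mono_set (hSsub i))]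
    apply setIntegral_mono_set hhint (ae_of_all _ (fun x => sq_nonneg _))
    apply HasSubset.Subset.eventuallyLE
    intro x hx
    simp only [Set.mem_iUnion] at hx
    obtain ⟨i, _, hxi⟩ := hx
    exact hSsub i hxi
  -- lower bound on total length
  have hsumℓ : b - a ≤ ∑ i, ℓ i := by
    have htel := fin_telescope (fun j => max a (min b (t j)))
    have hterm : ∀ i : Fin M,
        max a (min b (t i.succ)) - max a (min b (t i.castSucc)) ≤ ℓ i := by
      intro i
      exact clip_le a b (t i.castSucc) (t i.succ) hab (htm (Fin.castSucc_le_succ i))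
    have hends : max a (min b (t (Fin.last M))) - max a (min b (t 0)) = b - a := by
      rw [ht0, htl, min_eq_left hb, max_eq_right hab,
        min_eq_right (ha.trans hab), max_eq_left ha]
    calc b - a = ∑ i : Fin M, (max a (min b (t i.succ)) - max a (min b (t i.castSucc))) := by
          rw [htel, hends]
      _ ≤ ∑ i, ℓ i := Finset.sum_le_sum (fun i _ => hterm i)
  -- power mean
  have hcube : (b - a)^3 / (M:ℝ)^2 ≤ ∑ i, (ℓ i)^3 := by
    have hpow := pow_sum_div_card_le_sum_pow
      (s := (Finset.univ : Finset (Fin M))) (f := ℓ) (fun i _ => hℓnn i) 2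
    have hcard : ((Finset.univ : Finset (Fin M)).card : ℝ) = (M:ℝ) := by simp
    rw [hcard] at hpow
    calc (b - a)^3 / (M:ℝ)^2 ≤ (∑ i, ℓ i)^3 / (M:ℝ)^2 := by
          gcongr
        _ ≤ ∑ i, (ℓ i)^3 := hpow
  -- assemble
  calc D^2 * κ^2 * (b - a)^3 / (12 * (M:ℝ)^2)
      = D^2 * (κ^2/12) * ((b - a)^3 / (M:ℝ)^2) := by ring
    _ ≤ D^2 * (κ^2/12) * ∑ i, (ℓ i)^3 := by
        apply mul_le_mul_of_nonneg_left hcube (by positivity)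
    _ = ∑ i, D^2 * (κ^2 * (ℓ i)^3 / 12) := by
        rw [Finset.mul_sum]
        exact Finset.sum_congr rfl (fun i _ => by ring)
    _ ≤ ∑ i, ∫ x in S i, h x := Finset.sum_le_sum (fun i _ => hpiece i)
    _ ≤ ∫ x in Set.Icc (0:ℝ) 1, h x := hsum1
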